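/- Let L be an N×N real symmetric matrix whose eigenvalues are all contained in the interval [0, λ_max], let s be a nonzero vector in ℝ^N, and let g : [0, λ_max] → ℝ be continuous. Let V_M be an N×M real matrix with orthonormal columns whose columns span the Krylov subspace K_M(L,s) = span{s, Ls, …, L^{M−1}s} and whose first column is s/‖s‖₂, and set H_M = V_Mᵀ L V_M. Then the Lanczos approximation g_M = ‖s‖₂ · V_M g(H_M) e₁ (where e₁ ∈ ℝ^M is the first standard unit vector) satisfies ‖g(L)s − g_M‖₂ ≤ 2‖s‖₂ · min over all polynomials p of degree at most M−1 of max over z ∈ [0, λ_max] of |g(z) − p(z)|. -/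
import Mathlib


open Matrix Polynomial

/-- The Euclidean norm of a vector in `Fin n → ℝ`. -/
noncomputable def euclNorm {n : ℕ} (x : Fin n → ℝ) : ℝ := Real.sqrt (∑ i, x i ^ 2)

lemma euclNorm_eq_norm {n : ℕ} (x : Fin n → ℝ) :
    euclNorm x = ‖(WithLp.equiv 2 (Fin n → ℝ)).symm x‖ := by
  simp [euclNorm, EuclideanSpace.norm_eq, sq_abs]

lemma euclNorm_nonneg {n : ℕ} (x : Fin n → ℝ) : 0 ≤ euclNorm x := Real.sqrt_nonneg _

lemma euclNorm_sq {n : ℕ} (x : Fin n → ℝ) : euclNorm x ^ 2 = ∑ i, x i ^ 2 :=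
  Real.sq_sqrt (Finset.sum_nonneg fun _ _ => sq_nonneg _)

lemma euclNorm_sub_le {n : ℕ} (x y : Fin n → ℝ) :
    euclNorm (x - y) ≤ euclNorm x + euclNorm y := by
  rw [euclNorm_eq_norm, euclNorm_eq_norm, euclNorm_eq_norm]
  exact norm_sub_le _ _

lemma euclNorm_smul {n : ℕ} (c : ℝ) (x : Fin n → ℝ) :
    euclNorm (c • x) = |c| * euclNorm x := by
  rw [euclNorm_eq_norm, euclNorm_eq_norm,
    show (WithLp.equiv 2 (Fin n → ℝ)).symm (c • x)
      = c • (WithLp.equiv 2 (Fin n → ℝ)).symm x from rfl, norm_smul, Real.norm_eq_abs]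

lemma euclNorm_single {n : ℕ} (i : Fin n) : euclNorm (Pi.single i (1 : ℝ)) = 1 := by
  rw [euclNorm]
  have h : ∑ j : Fin n, (Pi.single i 1 : Fin n → ℝ) j ^ 2 = 1 := by
    rw [Finset.sum_eq_single i]
    · simp
    · intro b _ hb; rw [Pi.single_eq_of_ne hb]; simp
    · intro h; exact absurd (Finset.mem_univ i) h
  rw [h, Real.sqrt_one]

lemma sum_sq_eq_dot {n : ℕ} (x : Fin n → ℝ) : ∑ i, x i ^ 2 = x ⬝ᵥ x := by
  simp [dotProduct, pow_two]

lemma dot_mulVec_eq {m n : ℕ} (A : Matrix (Fin m) (Fin n) ℝ) (x : Fin n → ℝ) (z : Fin m → ℝ) :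
    x ⬝ᵥ (Aᵀ *ᵥ z) = (A *ᵥ x) ⬝ᵥ z := by
  rw [Matrix.dotProduct_mulVec, Matrix.vecMul_transpose]

lemma dot_mulVec_eq' {m n : ℕ} (A : Matrix (Fin m) (Fin n) ℝ) (x : Fin m → ℝ) (z : Fin n → ℝ) :
    x ⬝ᵥ (A *ᵥ z) = (Aᵀ *ᵥ x) ⬝ᵥ z := by
  rw [Matrix.dotProduct_mulVec]
  congr 1
  rw [← Matrix.transpose_transpose A, Matrix.vecMul_transpose, Matrix.transpose_transpose]

lemma euclNorm_mulVec_orth {m n : ℕ} (A : Matrix (Fin m) (Fin n) ℝ) (hA : Aᵀ * A = 1)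
    (x : Fin n → ℝ) : euclNorm (A *ᵥ x) = euclNorm x := by
  unfold euclNorm
  congr 1
  rw [sum_sq_eq_dot, sum_sq_eq_dot]
  have h : (A *ᵥ x) ⬝ᵥ (A *ᵥ x) = x ⬝ᵥ ((Aᵀ * A) *ᵥ x) := by
    rw [← Matrix.mulVec_mulVec, dot_mulVec_eq]
  rw [h, hA, Matrix.one_mulVec]

lemma euclNorm_diag_le {n : ℕ} (d : Fin n → ℝ) (c : ℝ) (hc : 0 ≤ c) (hd : ∀ i, |d i| ≤ c)
    (x : Fin n → ℝ) : euclNorm (Matrix.diagonal d *ᵥ x) ≤ c * euclNorm x := by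
  unfold euclNorm
  rw [← Real.sqrt_sq hc, ← Real.sqrt_mul (sq_nonneg c)]
  apply Real.sqrt_le_sqrt
  rw [Finset.mul_sum]
  apply Finset.sum_le_sum
  intro i _
  have h : (Matrix.diagonal d *ᵥ x) i = d i * x i := Matrix.mulVec_diagonal d x i
  rw [h, mul_pow]
  apply mul_le_mul_of_nonneg_right _ (sq_nonneg _)
  calc d i ^ 2 = |d i| ^ 2 := (sq_abs _).symm
    _ ≤ c ^ 2 := by
        apply pow_le_pow_left₀ (abs_nonneg _) (hd i)

lemma conjt_pow {n : ℕ} (U D : Matrix (Fin n) (Fin n) ℝ) (hU : Uᵀ * U = 1) :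
    ∀ k : ℕ, (U * D * Uᵀ) ^ k = U * D ^ k * Uᵀ
  | 0 => by
      simp only [pow_zero, Matrix.mul_one]
      exact (mul_eq_one_comm.mp hU).symm
  | (k + 1) => by
      rw [pow_succ, conjt_pow U D hU k, pow_succ]
      calc U * D ^ k * Uᵀ * (U * D * Uᵀ)
          = U * D ^ k * ((Uᵀ * U) * (D * Uᵀ)) := by simp only [Matrix.mul_assoc]
        _ = U * (D ^ k * D) * Uᵀ := by rw [hU, one_mul]; simp only [Matrix.mul_assoc]

lemma aeval_conj {n : ℕ} (U : Matrix (Fin n) (Fin n) ℝ) (Λ : Fin n → ℝ) (hU : Uᵀ * U = 1)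
    (p : Polynomial ℝ) :
    Polynomial.aeval (U * Matrix.diagonal Λ * Uᵀ) p
      = U * Matrix.diagonal (fun i => p.eval (Λ i)) * Uᵀ := by
  induction p using Polynomial.induction_on' with
  | add p q hp hq =>
    have h : (fun i => (p + q).eval (Λ i))
        = fun i => p.eval (Λ i) + q.eval (Λ i) := by
      funext i; simp
    rw [map_add, hp, hq, h, ← Matrix.diagonal_add, Matrix.mul_add, Matrix.add_mul]
  | monomial k a =>
    have h1 : (fun i => (Polynomial.monomial k a).eval (Λ i))
        = a • fun i => Λ i ^ k := by
      funext i; simp [Polynomial.eval_monomial]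
    have h2 : (Matrix.diagonal Λ) ^ k = Matrix.diagonal fun i => Λ i ^ k := by
      rw [Matrix.diagonal_pow]; rfl
    rw [Polynomial.aeval_monomial, conjt_pow U (Matrix.diagonal Λ) hU k, h1,
      Matrix.diagonal_smul, ← h2, Algebra.algebraMap_eq_smul_one, smul_mul_assoc,
      one_mul, mul_smul_comm, smul_mul_assoc]

lemma sum_mulVec' {m n ι : Type*} [Fintype n] (t : Finset ι)
    (A : ι → Matrix m n ℝ) (x : n → ℝ) :
    (∑ k ∈ t, A k) *ᵥ x = ∑ k ∈ t, A k *ᵥ x := by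
  induction t using Finset.cons_induction with
  | empty => simp [Matrix.zero_mulVec]
  | cons a t ha ih => simp [Finset.sum_cons, Matrix.add_mulVec, ih]

lemma mulVec_sum' {m n ι : Type*} [Fintype n] (t : Finset ι)
    (A : Matrix m n ℝ) (x : ι → n → ℝ) :
    A *ᵥ (∑ k ∈ t, x k) = ∑ k ∈ t, A *ᵥ x k := by
  induction t using Finset.cons_induction with
  | empty => simp [Matrix.mulVec_zero]
  | cons a t ha ih => simp [Finset.sum_cons, Matrix.mulVec_add, ih]

/-- The Lanczos approximation error bound (Güttel, Cor. 3.4):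
`‖g(L)s − g_M‖₂ ≤ 2‖s‖₂ · min_{p ∈ P_{M−1}} max_{z ∈ [0,λ_max]} |g(z) − p(z)|`,
where `g(L)` and `g(H_M)` are defined via spectral decompositions. -/
theorem lanczos_error_bound
    (N M : ℕ) (hM : 0 < M)
    (L : Matrix (Fin N) (Fin N) ℝ) (hL : L.IsSymm)
    (lammax : ℝ)
    -- a spectral decomposition of L, with all eigenvalues in [0, λ_max]
    (U : Matrix (Fin N) (Fin N) ℝ) (Λ : Fin N → ℝ)
    (hU : Uᵀ * U = 1) (hLdec : L = U * Matrix.diagonal Λ * Uᵀ)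
    (hΛ : ∀ i, Λ i ∈ Set.Icc (0 : ℝ) lammax)
    -- a nonzero vector s
    (s : Fin N → ℝ) (hs : s ≠ 0)
    -- a continuous function g : [0, λ_max] → ℝ
    (g : ℝ → ℝ) (hg : ContinuousOn g (Set.Icc 0 lammax))
    -- V_M has orthonormal columns spanning the Krylov subspace K_M(L, s),
    -- and its first column is s / ‖s‖₂
    (V : Matrix (Fin N) (Fin M) ℝ)
    (hV : Vᵀ * V = 1)
    (hspan : Submodule.span ℝ (Set.range fun j : Fin M => Vᵀ j)
      = Submodule.span ℝ (Set.range fun k : Fin M => (L ^ (k : ℕ)) *ᵥ s))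
    (hfirst : ∀ i, V i ⟨0, hM⟩ = s i / euclNorm s)
    -- a spectral decomposition of H_M = V_Mᵀ L V_M
    (W : Matrix (Fin M) (Fin M) ℝ) (μ : Fin M → ℝ)
    (hW : Wᵀ * W = 1) (hHdec : Vᵀ * L * V = W * Matrix.diagonal μ * Wᵀ) :
    euclNorm ((U * Matrix.diagonal (fun i => g (Λ i)) * Uᵀ) *ᵥ s
        - euclNorm s • (V *ᵥ ((W * Matrix.diagonal (fun i => g (μ i)) * Wᵀ)
            *ᵥ fun j : Fin M => if j = ⟨0, hM⟩ then (1 : ℝ) else 0)))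
      ≤ 2 * euclNorm s *
        sInf { e : ℝ | ∃ p : Polynomial ℝ, p.natDegree ≤ M - 1 ∧
          e = sSup ((fun z => |g z - p.eval z|) '' Set.Icc 0 lammax) } := by
  classical
  have hN : 0 < N := by
    by_contra h
    push_neg at h
    interval_cases N
    exact hs (Subsingleton.elim _ _)
  have hlam : (0 : ℝ) ≤ lammax := le_trans (hΛ ⟨0, hN⟩).1 (hΛ ⟨0, hN⟩).2
  set nrm := euclNorm s with hnrmdef
  have hnrm_pos : 0 < nrm := by
    rw [hnrmdef, euclNorm]
    apply Real.sqrt_pos.mpr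
    obtain ⟨i, hi⟩ := Function.ne_iff.mp hs
    have hi' : s i ≠ 0 := by simpa using hi
    have h1 : 0 < s i ^ 2 := by positivity
    exact h1.trans_le (Finset.single_le_sum (f := fun j => s j ^ 2)
      (fun j _ => sq_nonneg _) (Finset.mem_univ i))
  have hUU : U * Uᵀ = 1 := mul_eq_one_comm.mp hU
  have hWW : W * Wᵀ = 1 := mul_eq_one_comm.mp hW
  have hUt : (Uᵀ)ᵀ * Uᵀ = 1 := by rw [Matrix.transpose_transpose]; exact hUU
  have hWt : (Wᵀ)ᵀ * Wᵀ = 1 := by rw [Matrix.transpose_transpose]; exact hWW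
  have he1 : (fun j : Fin M => if j = ⟨0, hM⟩ then (1 : ℝ) else 0)
      = Pi.single (⟨0, hM⟩ : Fin M) 1 := by
    funext j; simp [Pi.single_apply]
  -- V Vᵀ is the identity on the Krylov subspace
  have hproj : ∀ j, j < M → (V * Vᵀ) *ᵥ (L ^ j *ᵥ s) = L ^ j *ᵥ s := by
    intro j hj
    have hmem : L ^ j *ᵥ s ∈ Submodule.span ℝ (Set.range fun j : Fin M => Vᵀ j) := by
      rw [hspan]
      exact Submodule.subset_span ⟨⟨j, hj⟩, rfl⟩
    have hfix : Submodule.span ℝ (Set.range fun j : Fin M => Vᵀ j)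
        ≤ LinearMap.eqLocus ((V * Vᵀ).mulVecLin) LinearMap.id := by
      rw [Submodule.span_le]
      rintro _ ⟨j, rfl⟩
      show (V * Vᵀ) *ᵥ (Vᵀ j) = Vᵀ j
      have hcol : Vᵀ j = V *ᵥ Pi.single j 1 := by
        funext i
        rw [Matrix.mulVec_single]
        simp [Matrix.transpose_apply]
      rw [hcol, Matrix.mulVec_mulVec, Matrix.mul_assoc, hV, Matrix.mul_one]
    exact hfix hmem
  -- exactness of the Lanczos approximation on powers
  have hkey : ∀ k, k < M → V *ᵥ ((Vᵀ * L * V) ^ k *ᵥ Pi.single (⟨0, hM⟩ : Fin M) 1)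
      = nrm⁻¹ • (L ^ k *ᵥ s) := by
    intro k
    induction k with
    | zero =>
      intro _
      funext i
      rw [pow_zero, Matrix.one_mulVec, Matrix.mulVec_single, pow_zero, Matrix.one_mulVec]
      simp [hfirst i, div_eq_inv_mul]
    | succ k ih =>
      intro hk
      have hk' : k < M := Nat.lt_of_succ_lt hk
      have ihk := ih hk'
      rw [pow_succ', ← Matrix.mulVec_mulVec, Matrix.mulVec_mulVec,
        show V * (Vᵀ * L * V) = (V * Vᵀ) * L * V by simp only [Matrix.mul_assoc],
        ← Matrix.mulVec_mulVec, ← Matrix.mulVec_mulVec, ihk, Matrix.mulVec_smul,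
        Matrix.mulVec_smul,
        show L *ᵥ (L ^ k *ᵥ s) = L ^ (k + 1) *ᵥ s from by
          rw [Matrix.mulVec_mulVec, ← pow_succ'],
        hproj (k + 1) hk]
  -- exactness on polynomials of degree < M
  have hexact : ∀ p : Polynomial ℝ, p.natDegree ≤ M - 1 →
      (Polynomial.aeval L p) *ᵥ s
        = nrm • (V *ᵥ ((Polynomial.aeval (Vᵀ * L * V) p) *ᵥ
            Pi.single (⟨0, hM⟩ : Fin M) 1)) := by
    intro p hp
    have hdeg : p.natDegree < M := by omega
    rw [Polynomial.aeval_eq_sum_range' hdeg L,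
      Polynomial.aeval_eq_sum_range' hdeg (Vᵀ * L * V),
      sum_mulVec', sum_mulVec', mulVec_sum', Finset.smul_sum]
    apply Finset.sum_congr rfl
    intro k hk
    rw [Matrix.smul_mulVec, Matrix.smul_mulVec, Matrix.mulVec_smul,
      hkey k (Finset.mem_range.mp hk), smul_comm nrm, smul_smul nrm,
      mul_inv_cancel₀ hnrm_pos.ne', one_smul]
  -- the eigenvalues of H lie in [0, lammax]
  have hμ : ∀ i, μ i ∈ Set.Icc (0 : ℝ) lammax := by
    intro i
    have hdiagentry : ∀ (B : Matrix (Fin M) (Fin M) ℝ),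
        Pi.single i (1 : ℝ) ⬝ᵥ (B *ᵥ Pi.single i 1) = B i i := by
      intro B
      rw [Matrix.mulVec_single]
      simp [dotProduct, Pi.single_apply]
    have h0 : μ i = Pi.single i (1 : ℝ) ⬝ᵥ ((Wᵀ * (Vᵀ * L * V) * W) *ᵥ Pi.single i 1) := by
      rw [hdiagentry, hHdec,
        show Wᵀ * (W * Matrix.diagonal μ * Wᵀ) * W
          = (Wᵀ * W) * Matrix.diagonal μ * (Wᵀ * W) from by simp only [Matrix.mul_assoc],
        hW]
      simp
    have hform : μ i = (Uᵀ *ᵥ (V *ᵥ (W *ᵥ Pi.single i 1)))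
        ⬝ᵥ (Matrix.diagonal Λ *ᵥ (Uᵀ *ᵥ (V *ᵥ (W *ᵥ Pi.single i 1)))) := by
      rw [h0,
        show (Wᵀ * (Vᵀ * L * V) * W) *ᵥ Pi.single i 1
          = Wᵀ *ᵥ ((Vᵀ * L * V) *ᵥ (W *ᵥ Pi.single i 1)) from by
            simp only [Matrix.mulVec_mulVec, Matrix.mul_assoc],
        dot_mulVec_eq W,
        show (Vᵀ * L * V) *ᵥ (W *ᵥ Pi.single i 1)
          = Vᵀ *ᵥ (L *ᵥ (V *ᵥ (W *ᵥ Pi.single i 1))) from by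
            simp only [Matrix.mulVec_mulVec, Matrix.mul_assoc],
        dot_mulVec_eq V, hLdec,
        show (U * Matrix.diagonal Λ * Uᵀ) *ᵥ (V *ᵥ (W *ᵥ Pi.single i 1))
          = U *ᵥ (Matrix.diagonal Λ *ᵥ (Uᵀ *ᵥ (V *ᵥ (W *ᵥ Pi.single i 1)))) from by
            simp only [Matrix.mulVec_mulVec, Matrix.mul_assoc],
        dot_mulVec_eq' U]
    have hnorm1 : euclNorm (Uᵀ *ᵥ (V *ᵥ (W *ᵥ Pi.single i 1))) = 1 := by
      rw [euclNorm_mulVec_orth Uᵀ hUt, euclNorm_mulVec_orth V hV,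
        euclNorm_mulVec_orth W hW, euclNorm_single]
    have hsum : ∑ j, (Uᵀ *ᵥ (V *ᵥ (W *ᵥ Pi.single i 1))) j ^ 2 = 1 := by
      rw [← euclNorm_sq, hnorm1, one_pow]
    have hform' : μ i = ∑ j, Λ j * (Uᵀ *ᵥ (V *ᵥ (W *ᵥ Pi.single i 1))) j ^ 2 := by
      rw [hform]
      simp only [dotProduct, Matrix.mulVec_diagonal]
      exact Finset.sum_congr rfl fun j _ => by ring
    constructor
    · rw [hform']
      exact Finset.sum_nonneg fun j _ => mul_nonneg (hΛ j).1 (sq_nonneg _)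
    · rw [hform']
      calc ∑ j, Λ j * (Uᵀ *ᵥ (V *ᵥ (W *ᵥ Pi.single i 1))) j ^ 2
          ≤ ∑ j, lammax * (Uᵀ *ᵥ (V *ᵥ (W *ᵥ Pi.single i 1))) j ^ 2 :=
            Finset.sum_le_sum fun j _ =>
              mul_le_mul_of_nonneg_right (hΛ j).2 (sq_nonneg _)
        _ = lammax := by rw [← Finset.mul_sum, hsum, mul_one]
  -- the main estimate, for an arbitrary polynomial and bound
  have hmain : ∀ p : Polynomial ℝ, p.natDegree ≤ M - 1 →
      ∀ c : ℝ, (∀ z ∈ Set.Icc (0 : ℝ) lammax, |g z - p.eval z| ≤ c) →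
      euclNorm ((U * Matrix.diagonal (fun i => g (Λ i)) * Uᵀ) *ᵥ s
          - nrm • (V *ᵥ ((W * Matrix.diagonal (fun i => g (μ i)) * Wᵀ)
              *ᵥ Pi.single (⟨0, hM⟩ : Fin M) 1))) ≤ 2 * nrm * c := by
    intro p hp c hc
    have hc0 : 0 ≤ c := le_trans (abs_nonneg _) (hc 0 ⟨le_refl _, hlam⟩)
    set e1 : Fin M → ℝ := Pi.single (⟨0, hM⟩ : Fin M) 1 with he1def
    set A1 := (U * Matrix.diagonal (fun i => g (Λ i)) * Uᵀ) *ᵥ s with hA1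
    set B1 := (U * Matrix.diagonal (fun i => p.eval (Λ i)) * Uᵀ) *ᵥ s with hB1
    set C1 := nrm • (V *ᵥ ((W * Matrix.diagonal (fun i => g (μ i)) * Wᵀ) *ᵥ e1)) with hC1
    set D1 := nrm • (V *ᵥ ((W * Matrix.diagonal (fun i => p.eval (μ i)) * Wᵀ) *ᵥ e1))
      with hD1
    have hBD : B1 = D1 := by
      rw [hB1, hD1, ← aeval_conj U Λ hU p, ← aeval_conj W μ hW p, ← hLdec, ← hHdec]
      exact hexact p hp
    have hsplit : A1 - C1 = (A1 - B1) - (C1 - D1) := by rw [hBD]; abel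
    rw [hsplit]
    have hdiff : ∀ {n : ℕ} (X : Matrix (Fin n) (Fin n) ℝ) (f1 f2 : Fin n → ℝ),
        X * Matrix.diagonal f1 * Xᵀ - X * Matrix.diagonal f2 * Xᵀ
          = X * Matrix.diagonal (fun i => f1 i - f2 i) * Xᵀ := by
      intro n X f1 f2
      rw [show X * Matrix.diagonal f1 * Xᵀ - X * Matrix.diagonal f2 * Xᵀ
          = X * (Matrix.diagonal f1 - Matrix.diagonal f2) * Xᵀ from by
            rw [Matrix.mul_sub, Matrix.sub_mul],
        Matrix.diagonal_sub]
    have hAB : euclNorm (A1 - B1) ≤ c * nrm := by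
      rw [hA1, hB1, ← Matrix.sub_mulVec, hdiff U]
      rw [← Matrix.mulVec_mulVec, ← Matrix.mulVec_mulVec,
        euclNorm_mulVec_orth U hU]
      calc euclNorm (Matrix.diagonal (fun i => g (Λ i) - p.eval (Λ i))
            *ᵥ (Uᵀ *ᵥ s)) ≤ c * euclNorm (Uᵀ *ᵥ s) := by
            apply euclNorm_diag_le _ c hc0
            intro i
            exact hc (Λ i) (hΛ i)
        _ = c * nrm := by rw [euclNorm_mulVec_orth Uᵀ hUt s]
    have he1norm : euclNorm e1 = 1 := by rw [he1def]; exact euclNorm_single _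
    have hCD : euclNorm (C1 - D1) ≤ nrm * c := by
      rw [hC1, hD1, ← smul_sub, ← Matrix.mulVec_sub, ← Matrix.sub_mulVec, hdiff W]
      rw [euclNorm_smul, abs_of_pos hnrm_pos]
      apply mul_le_mul_of_nonneg_left _ hnrm_pos.le
      rw [euclNorm_mulVec_orth V hV, ← Matrix.mulVec_mulVec, ← Matrix.mulVec_mulVec,
        euclNorm_mulVec_orth W hW]
      calc euclNorm (Matrix.diagonal (fun i => g (μ i) - p.eval (μ i))
            *ᵥ (Wᵀ *ᵥ e1)) ≤ c * euclNorm (Wᵀ *ᵥ e1) := by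
            apply euclNorm_diag_le _ c hc0
            intro i
            exact hc (μ i) (hμ i)
        _ = c := by rw [euclNorm_mulVec_orth Wᵀ hWt e1, he1norm, mul_one]
    calc euclNorm ((A1 - B1) - (C1 - D1)) ≤ euclNorm (A1 - B1) + euclNorm (C1 - D1) :=
          euclNorm_sub_le _ _
      _ ≤ c * nrm + nrm * c := add_le_add hAB hCD
      _ = 2 * nrm * c := by ring
  -- assemble with the infimum
  set S := { e : ℝ | ∃ p : Polynomial ℝ, p.natDegree ≤ M - 1 ∧
      e = sSup ((fun z => |g z - p.eval z|) '' Set.Icc 0 lammax) } with hS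
  have hSne : S.Nonempty := ⟨_, 0, by simp, rfl⟩
  rw [he1]
  set ERR := euclNorm ((U * Matrix.diagonal (fun i => g (Λ i)) * Uᵀ) *ᵥ s
      - nrm • (V *ᵥ ((W * Matrix.diagonal (fun i => g (μ i)) * Wᵀ)
          *ᵥ Pi.single (⟨0, hM⟩ : Fin M) 1))) with hERR
  have hbd : ∀ e ∈ S, ERR ≤ 2 * nrm * e := by
    rintro e ⟨p, hp, rfl⟩
    apply hmain p hp
    intro z hz
    apply le_csSup
    · apply IsCompact.bddAbove_image isCompact_Icc
      exact (hg.sub (Polynomial.continuous p).continuousOn).abs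
    · exact ⟨z, hz, rfl⟩
  have h2pos : 0 < 2 * nrm := by positivity
  have hinf : ERR / (2 * nrm) ≤ sInf S :=
    le_csInf hSne fun e he => (div_le_iff₀' h2pos).mpr (hbd e he)
  calc ERR = 2 * nrm * (ERR / (2 * nrm)) := by field_simp
    _ ≤ 2 * nrm * sInf S := mul_le_mul_of_nonneg_left hinf h2pos.le
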